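/- arXiv:2308.08173 — 2 statements merged into one kernel-verified Lean document; each statement's English description precedes it below -/
import Mathlib

section
/- (Count update rule, Proposition 2.) Let G = (V, E) be a finite simple graph, let H be a connected finite simple graph with diameter d, let i, j ∈ V be distinct, and let G̃ be obtained from G by toggling the single edge {i, j}. Let N be the set of vertices whose distance from i is at most d in whichever of G or G̃ contains the edge {i, j}, and let G_S := G[N] and G̃_S := G̃[N] be the induced subgraphs of G and G̃ on N, respectively. Then sub(G̃, H) = sub(G, H) + sub(G̃_S, H) − sub(G_S, H), where sub(·, H) denotes the number of subgraphs isomorphic to H. -/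
open SimpleGraph

/-- The subgraph count `sub(G, H)`: the number of subgraphs of `G` isomorphic to `H`. -/
noncomputable def subCount {V W : Type*} (G : SimpleGraph V) (H : SimpleGraph W) : ℕ :=
  {A : G.Subgraph | Nonempty (A.coe ≃g H)}.ncard

/-- Toggling the single edge `{i, j}` of `G`: add it if absent, delete it if present. -/
def toggleEdge {V : Type*} (G : SimpleGraph V) (i j : V) : SimpleGraph V :=
  symmDiff G (SimpleGraph.edge i j)

namespace SubCountAux

variable {X W : Type*}

instance instFiniteSubgraph [Finite X] (L : SimpleGraph X) : Finite L.Subgraph :=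
  Finite.of_injective (fun A : L.Subgraph => (A.verts, A.Adj))
    (fun A B h => SimpleGraph.Subgraph.ext (congrArg Prod.fst h) (congrArg Prod.snd h))

lemma ncard_split {α : Type*} [Finite α] (P C : α → Prop) :
    {a | P a}.ncard = {a | P a ∧ C a}.ncard + {a | P a ∧ ¬ C a}.ncard := by
  have hs : {a | P a} = {a | P a ∧ C a} ∪ {a | P a ∧ ¬ C a} := by
    ext a; by_cases hc : C a <;> simp [hc]
  rw [hs, Set.ncard_union_eq ?_ (Set.toFinite _) (Set.toFinite _)]
  rw [Set.disjoint_left]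
  rintro a ⟨_, hc⟩ ⟨_, hc'⟩
  exact hc' hc

/-- Transfer a subgraph to another ambient graph containing all its edges. -/
def transfer {L L' : SimpleGraph X} (A : L.Subgraph)
    (h : ∀ u v, A.Adj u v → L'.Adj u v) : L'.Subgraph where
  verts := A.verts
  Adj := A.Adj
  adj_sub := fun {u v} huv => h u v huv
  edge_vert := fun {u v} huv => A.edge_vert huv
  symm := A.symm

def transferIso {L L' : SimpleGraph X} (A : L.Subgraph)
    (h : ∀ u v, A.Adj u v → L'.Adj u v) : (transfer A h).coe ≃g A.coe :=
  ⟨Equiv.refl _, Iff.rfl⟩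

/-- The count of subgraphs isomorphic to `H` avoiding a set of (potential) edges is the
same for two ambient graphs that agree away from those pairs. -/
def noedgeMap (H : SimpleGraph W) (L₁ L₂ : SimpleGraph X) (p : X → X → Prop)
    (h : ∀ u v, ¬ p u v → (L₁.Adj u v → L₂.Adj u v)) :
    {A : L₁.Subgraph | Nonempty (A.coe ≃g H) ∧ ∀ u v, p u v → ¬ A.Adj u v} →
    {A : L₂.Subgraph | Nonempty (A.coe ≃g H) ∧ ∀ u v, p u v → ¬ A.Adj u v} :=
  fun s =>
    ⟨transfer s.1 (fun u v huv => (em (p u v)).elim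
        (fun hpuv => absurd huv (s.2.2 u v hpuv))
        (fun hpuv => h u v hpuv (s.1.adj_sub huv))),
      ⟨(transferIso s.1 _).trans s.2.1.some⟩, s.2.2⟩

/-- The count of subgraphs isomorphic to `H` avoiding a set of (potential) edges is the
same for two ambient graphs that agree away from those pairs. -/
lemma ncard_noedge_eq (H : SimpleGraph W) (L L' : SimpleGraph X) (p : X → X → Prop)
    (hp : ∀ u v, ¬ p u v → (L.Adj u v ↔ L'.Adj u v)) :
    {A : L.Subgraph | Nonempty (A.coe ≃g H) ∧ ∀ u v, p u v → ¬ A.Adj u v}.ncard =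
    {A : L'.Subgraph | Nonempty (A.coe ≃g H) ∧ ∀ u v, p u v → ¬ A.Adj u v}.ncard := by
  rw [← Nat.card_coe_set_eq, ← Nat.card_coe_set_eq]
  apply Nat.card_congr
  refine ⟨noedgeMap H L L' p (fun u v h => (hp u v h).mp),
    noedgeMap H L' L p (fun u v h => (hp u v h).mpr), ?_, ?_⟩ <;>
    · rintro ⟨A, hA⟩
      apply Subtype.ext
      rfl

/-- Restriction of a subgraph whose vertices lie in `N` to the induced graph on `N`. -/
def restrictSub (L : SimpleGraph X) (N : Set X) (A : L.Subgraph) : (L.induce N).Subgraph where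
  verts := Subtype.val ⁻¹' A.verts
  Adj a b := A.Adj a b
  adj_sub := fun {a b} h => A.adj_sub h
  edge_vert := fun {a b} h => A.edge_vert h
  symm := ⟨fun a b h => A.adj_symm h⟩

def restrictSubIso (L : SimpleGraph X) (N : Set X) (A : L.Subgraph) (hA : A.verts ⊆ N) :
    (restrictSub L N A).coe ≃g A.coe where
  toFun b := ⟨b.1.1, b.2⟩
  invFun a := ⟨⟨a.1, hA a.2⟩, a.2⟩
  left_inv b := rfl
  right_inv a := rfl
  map_rel_iff' := Iff.rfl

/-- Extension of a subgraph of the induced graph on `N` to a subgraph of the ambient graph. -/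
def extendSub (L : SimpleGraph X) (N : Set X) (B : (L.induce N).Subgraph) : L.Subgraph where
  verts := Subtype.val '' B.verts
  Adj u v := ∃ (hu : u ∈ N) (hv : v ∈ N), B.Adj ⟨u, hu⟩ ⟨v, hv⟩
  adj_sub := by rintro u v ⟨hu, hv, h⟩; exact B.adj_sub h
  edge_vert := by rintro u v ⟨hu, hv, h⟩; exact ⟨⟨u, hu⟩, B.edge_vert h, rfl⟩
  symm := ⟨by rintro u v ⟨hu, hv, h⟩; exact ⟨hv, hu, B.adj_symm h⟩⟩

def extendSubIso (L : SimpleGraph X) (N : Set X) (B : (L.induce N).Subgraph) :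
    (extendSub L N B).coe ≃g B.coe where
  toFun a := ⟨⟨a.1, by obtain ⟨b, hb, he⟩ := a.2; exact he ▸ b.2⟩,
    by obtain ⟨b, hb, he⟩ := a.2
       have : (⟨a.1, he ▸ b.2⟩ : N) = b := Subtype.ext he.symm
       rw [this]; exact hb⟩
  invFun b := ⟨b.1.1, ⟨b.1, b.2, rfl⟩⟩
  left_inv a := rfl
  right_inv b := by apply Subtype.ext; apply Subtype.ext; rfl
  map_rel_iff' := by
    rintro a a'
    constructor
    · intro h
      exact ⟨_, _, h⟩
    · rintro ⟨hu, hv, h⟩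
      exact h

/-- Localization: subgraphs isomorphic to `H` containing the edge `{i,j}` are in bijection
with such subgraphs of the induced graph on `N`, provided all of them live inside `N`. -/
lemma ncard_edge_eq (H : SimpleGraph W) (L : SimpleGraph X) (N : Set X) (i j : X)
    (hsub : ∀ A : L.Subgraph, Nonempty (A.coe ≃g H) → A.Adj i j → A.verts ⊆ N) :
    {A : L.Subgraph | Nonempty (A.coe ≃g H) ∧ A.Adj i j}.ncard =
    {B : (L.induce N).Subgraph | Nonempty (B.coe ≃g H) ∧
      ∃ (hi : i ∈ N) (hj : j ∈ N), B.Adj ⟨i, hi⟩ ⟨j, hj⟩}.ncard := by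
  rw [← Nat.card_coe_set_eq, ← Nat.card_coe_set_eq]
  apply Nat.card_congr
  refine ⟨fun s => ⟨restrictSub L N s.1,
      ⟨(restrictSubIso L N s.1 (hsub s.1 s.2.1 s.2.2)).trans s.2.1.some⟩,
      hsub s.1 s.2.1 s.2.2 (s.1.edge_vert s.2.2),
      hsub s.1 s.2.1 s.2.2 (s.1.edge_vert (s.1.adj_symm s.2.2)), s.2.2⟩,
    fun s => ⟨extendSub L N s.1, ⟨(extendSubIso L N s.1).trans s.2.1.some⟩, s.2.2⟩, ?_, ?_⟩
  · rintro ⟨A, hiso, hAdj⟩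
    apply Subtype.ext
    have hA : A.verts ⊆ N := hsub A hiso hAdj
    apply SimpleGraph.Subgraph.ext
    · exact Set.image_preimage_eq_of_subset (by rwa [Subtype.range_coe])
    · ext u v
      constructor
      · rintro ⟨hu, hv, h⟩
        exact h
      · intro h
        exact ⟨hA (A.edge_vert h), hA (A.edge_vert (A.adj_symm h)), h⟩
  · rintro ⟨B, hiso, hi, hj, hAdj⟩
    apply Subtype.ext
    apply SimpleGraph.Subgraph.ext
    · exact Set.preimage_image_eq _ Subtype.val_injective
    · ext a b
      constructor
      · rintro ⟨hu, hv, h⟩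
        convert h using 2 <;> exact Subtype.ext rfl
      · intro h
        exact ⟨a.2, b.2, by convert h using 2 <;> exact Subtype.ext rfl⟩

/-- Any subgraph isomorphic to connected `H` and containing the edge `{i,j}` has all its
vertices within distance `H.diam` of `i`. -/
lemma verts_subset_ball [Finite W] (H : SimpleGraph W) (hH : H.Connected)
    (L : SimpleGraph X) {i j : X} (A : L.Subgraph)
    (hiso : Nonempty (A.coe ≃g H)) (hAdj : A.Adj i j) :
    A.verts ⊆ {v | L.dist i v ≤ H.diam} := by
  obtain ⟨f⟩ := hiso
  have hW : Nonempty W := hH.nonempty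
  have hne : H.ediam ≠ ⊤ := by
    obtain ⟨u, v, huv⟩ := H.exists_edist_eq_ediam_of_finite
    rw [← huv]
    exact (edist_ne_top_iff_reachable).mpr (hH u v)
  intro v hv
  let x : A.verts := ⟨i, A.edge_vert hAdj⟩
  let y : A.verts := ⟨v, hv⟩
  obtain ⟨p, hp⟩ := hH.exists_walk_length_eq_dist (f x) (f y)
  let q := (p.map f.symm.toHom).map A.hom
  have hq : L.dist (A.hom (f.symm (f x))) (A.hom (f.symm (f y))) ≤ q.length :=
    SimpleGraph.dist_le q
  rw [f.symm_apply_apply, f.symm_apply_apply] at hq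
  have hlen : q.length = H.dist (f x) (f y) := by
    simp only [q, SimpleGraph.Walk.length_map, hp]
  have : L.dist i v ≤ H.dist (f x) (f y) := hlen ▸ hq
  exact le_trans this (SimpleGraph.dist_le_diam hne)

end SubCountAux

open SubCountAux

/-- Count update rule (Proposition 2). Let `G̃` be obtained from `G` by toggling the
single edge `{i, j}` (`i ≠ j`), let `H` be a connected pattern with diameter `d`, and let
`N` be the set of vertices at distance at most `d` from `i` in whichever of `G` or `G̃`
contains the edge `{i, j}`. With `G_S := G[N]` and `G̃_S := G̃[N]` the induced subgraphs
on `N`, we have `sub(G̃, H) = sub(G, H) + sub(G̃_S, H) − sub(G_S, H)`. -/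
theorem subCount_update_rule
    {V W : Type*} [Fintype V] [Fintype W]
    (G : SimpleGraph V) [DecidableRel G.Adj]
    (H : SimpleGraph W) (hH : H.Connected) (d : ℕ) (hd : H.diam = d)
    (i j : V) (hij : i ≠ j)
    (G' : SimpleGraph V) (hG' : G' = toggleEdge G i j)
    (N : Set V) (hN : N = {v | (if G.Adj i j then G else G').dist i v ≤ d}) :
    (subCount G' H : ℤ) =
      subCount G H + subCount (G'.induce N) H - subCount (G.induce N) H := by
  subst hd
  -- basic facts about the toggled graph
  have hE : ∀ u v : V, G'.Adj u v ↔ (G.Adj u v ∧ ¬ ((u = i ∧ v = j ∨ u = j ∧ v = i) ∧ u ≠ v))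
      ∨ ((u = i ∧ v = j ∨ u = j ∧ v = i) ∧ u ≠ v) ∧ ¬ G.Adj u v := by
    intro u v
    rw [hG']
    simp [toggleEdge, symmDiff_def, SimpleGraph.edge_adj]
  have hagree : ∀ u v : V, ¬ (u = i ∧ v = j ∨ u = j ∧ v = i) → (G.Adj u v ↔ G'.Adj u v) := by
    intro u v hp
    rw [hE u v]
    tauto
  have hEij : G'.Adj i j ↔ ¬ G.Adj i j := by
    rw [hE i j]
    simp [hij]
  -- the "bad pair" predicates
  set p : V → V → Prop := fun u v => (u = i ∧ v = j ∨ u = j ∧ v = i) with hpdef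
  have hnoedge_big : ∀ (L : SimpleGraph V) (A : L.Subgraph),
      (∀ u v, p u v → ¬ A.Adj u v) ↔ ¬ A.Adj i j := by
    intro L A
    constructor
    · intro h hA
      exact h i j (Or.inl ⟨rfl, rfl⟩) hA
    · rintro h u v (⟨rfl, rfl⟩ | ⟨rfl, rfl⟩) hA
      · exact h hA
      · exact h (A.adj_symm hA)
  have hnoedge_ind : ∀ (L : SimpleGraph V) (B : (L.induce N).Subgraph),
      (∀ a b : N, p a b → ¬ B.Adj a b) ↔
        ¬ ∃ (hi : i ∈ N) (hj : j ∈ N), B.Adj ⟨i, hi⟩ ⟨j, hj⟩ := by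
    intro L B
    constructor
    · rintro h ⟨hi, hj, hB⟩
      exact h ⟨i, hi⟩ ⟨j, hj⟩ (Or.inl ⟨rfl, rfl⟩) hB
    · rintro h a b (⟨ha, hb⟩ | ⟨ha, hb⟩) hB
      · refine h ⟨ha ▸ a.2, hb ▸ b.2, ?_⟩
        convert hB using 2
        · exact ha.symm
        · exact hb.symm
      · refine h ⟨hb ▸ b.2, ha ▸ a.2, ?_⟩
        have hBs := B.adj_symm hB
        convert hBs using 2
        · exact hb.symm
        · exact ha.symm
  have conv_big : ∀ L : SimpleGraph V,
      {A : L.Subgraph | Nonempty (A.coe ≃g H) ∧ ∀ u v, p u v → ¬ A.Adj u v} =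
      {A : L.Subgraph | Nonempty (A.coe ≃g H) ∧ ¬ A.Adj i j} :=
    fun L => Set.ext fun A => and_congr_right fun _ => hnoedge_big L A
  have conv_ind : ∀ L : SimpleGraph V,
      {B : (L.induce N).Subgraph | Nonempty (B.coe ≃g H) ∧ ∀ a b : N, p a b → ¬ B.Adj a b} =
      {B : (L.induce N).Subgraph | Nonempty (B.coe ≃g H) ∧
        ¬ ∃ (hi : i ∈ N) (hj : j ∈ N), B.Adj ⟨i, hi⟩ ⟨j, hj⟩} :=
    fun L => Set.ext fun B => and_congr_right fun _ => hnoedge_ind L B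
  -- split all four counts
  have split : ∀ L : SimpleGraph V, subCount L H =
      {A : L.Subgraph | Nonempty (A.coe ≃g H) ∧ A.Adj i j}.ncard +
      {A : L.Subgraph | Nonempty (A.coe ≃g H) ∧ ¬ A.Adj i j}.ncard :=
    fun L => ncard_split _ _
  have split_ind : ∀ L : SimpleGraph V, subCount (L.induce N) H =
      {B : (L.induce N).Subgraph | Nonempty (B.coe ≃g H) ∧
        ∃ (hi : i ∈ N) (hj : j ∈ N), B.Adj ⟨i, hi⟩ ⟨j, hj⟩}.ncard +
      {B : (L.induce N).Subgraph | Nonempty (B.coe ≃g H) ∧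
        ¬ ∃ (hi : i ∈ N) (hj : j ∈ N), B.Adj ⟨i, hi⟩ ⟨j, hj⟩}.ncard :=
    fun L => ncard_split _ _
  -- the no-edge counts agree
  have hagree_ind : ∀ (a b : N), ¬ p a b → ((G.induce N).Adj a b ↔ (G'.induce N).Adj a b) :=
    fun a b h => hagree a b h
  have hn : {A : G.Subgraph | Nonempty (A.coe ≃g H) ∧ ¬ A.Adj i j}.ncard =
      {A : G'.Subgraph | Nonempty (A.coe ≃g H) ∧ ¬ A.Adj i j}.ncard := by
    rw [← conv_big G, ← conv_big G']
    exact ncard_noedge_eq H G G' p hagree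
  have hns : {B : (G.induce N).Subgraph | Nonempty (B.coe ≃g H) ∧
        ¬ ∃ (hi : i ∈ N) (hj : j ∈ N), B.Adj ⟨i, hi⟩ ⟨j, hj⟩}.ncard =
      {B : (G'.induce N).Subgraph | Nonempty (B.coe ≃g H) ∧
        ¬ ∃ (hi : i ∈ N) (hj : j ∈ N), B.Adj ⟨i, hi⟩ ⟨j, hj⟩}.ncard := by
    rw [← conv_ind G, ← conv_ind G']
    exact ncard_noedge_eq H (G.induce N) (G'.induce N) (fun a b => p a b) hagree_ind
  by_cases hGij : G.Adj i j
  · -- the edge is present in `G`, absent in `G'`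
    have hN' : N = {v | G.dist i v ≤ H.diam} := by rw [hN, if_pos hGij]
    have hz1 : {A : G'.Subgraph | Nonempty (A.coe ≃g H) ∧ A.Adj i j}.ncard = 0 := by
      rw [Set.ncard_eq_zero (Set.toFinite _)]
      ext A
      simp only [Set.mem_setOf_eq, Set.mem_empty_iff_false, iff_false, not_and]
      intro _ hA
      exact (hEij.mp (A.adj_sub hA)) hGij
    have hz2 : {B : (G'.induce N).Subgraph | Nonempty (B.coe ≃g H) ∧
        ∃ (hi : i ∈ N) (hj : j ∈ N), B.Adj ⟨i, hi⟩ ⟨j, hj⟩}.ncard = 0 := by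
      rw [Set.ncard_eq_zero (Set.toFinite _)]
      ext B
      simp only [Set.mem_setOf_eq, Set.mem_empty_iff_false, iff_false, not_and]
      rintro _ ⟨hi, hj, hB⟩
      exact (hEij.mp (B.adj_sub hB)) hGij
    have hloc : {A : G.Subgraph | Nonempty (A.coe ≃g H) ∧ A.Adj i j}.ncard =
        {B : (G.induce N).Subgraph | Nonempty (B.coe ≃g H) ∧
          ∃ (hi : i ∈ N) (hj : j ∈ N), B.Adj ⟨i, hi⟩ ⟨j, hj⟩}.ncard := by
      refine ncard_edge_eq H G N i j (fun A hiso hAdj => ?_)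
      rw [hN']
      exact verts_subset_ball H hH G A hiso hAdj
    rw [split G, split G', split_ind G, split_ind G', hz1, hz2, hloc, hn, hns]
    push_cast
    ring
  · -- the edge is present in `G'`, absent in `G`
    have hG'ij : G'.Adj i j := hEij.mpr hGij
    have hN' : N = {v | G'.dist i v ≤ H.diam} := by rw [hN, if_neg hGij]
    have hz1 : {A : G.Subgraph | Nonempty (A.coe ≃g H) ∧ A.Adj i j}.ncard = 0 := by
      rw [Set.ncard_eq_zero (Set.toFinite _)]
      ext A
      simp only [Set.mem_setOf_eq, Set.mem_empty_iff_false, iff_false, not_and]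
      intro _ hA
      exact hGij (A.adj_sub hA)
    have hz2 : {B : (G.induce N).Subgraph | Nonempty (B.coe ≃g H) ∧
        ∃ (hi : i ∈ N) (hj : j ∈ N), B.Adj ⟨i, hi⟩ ⟨j, hj⟩}.ncard = 0 := by
      rw [Set.ncard_eq_zero (Set.toFinite _)]
      ext B
      simp only [Set.mem_setOf_eq, Set.mem_empty_iff_false, iff_false, not_and]
      rintro _ ⟨hi, hj, hB⟩
      exact hGij (B.adj_sub hB)
    have hloc : {A : G'.Subgraph | Nonempty (A.coe ≃g H) ∧ A.Adj i j}.ncard =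
        {B : (G'.induce N).Subgraph | Nonempty (B.coe ≃g H) ∧
          ∃ (hi : i ∈ N) (hj : j ∈ N), B.Adj ⟨i, hi⟩ ⟨j, hj⟩}.ncard := by
      refine ncard_edge_eq H G' N i j (fun A hiso hAdj => ?_)
      rw [hN']
      exact verts_subset_ball H hH G' A hiso hAdj
    rw [split G, split G', split_ind G, split_ind G', hz1, hz2, hloc, hn, hns]
    push_cast
    ring
end

section
/- (Induced count update rule.) Let G = (V, E) be a finite simple graph, let H be a connected finite simple graph with diameter d, let i, j ∈ V be distinct, and let G̃ be obtained from G by toggling the single edge {i, j}. Let N be the set of vertices whose distance from i is at most d in whichever of G or G̃ contains the edge {i, j}, and let G_S := G[N] and G̃_S := G̃[N]. Then sub_I(G̃, H) = sub_I(G, H) + sub_I(G̃_S, H) − sub_I(G_S, H), where sub_I(·, H) denotes the number of induced subgraphs isomorphic to H. -/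
open SimpleGraph

/-- The induced subgraph count `sub_I(G, H)`: the number of vertex subsets `W` of `G`
such that the induced subgraph `G[W]` is isomorphic to `H`. -/
noncomputable def inducedSubCount {V W : Type*} (G : SimpleGraph V) (H : SimpleGraph W) : ℕ :=
  {s : Set V | Nonempty (G.induce s ≃g H)}.ncard

/-- Auxiliary: induced subgraph of an induced subgraph. -/
noncomputable def nestIso {V : Type*} (G : SimpleGraph V) (N : Set V) (t : Set ↥N) :
    (G.induce N).induce t ≃g G.induce (Subtype.val '' t) :=
  { Equiv.Set.image _ t Subtype.val_injective with
    map_rel_iff' := Iff.rfl }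

/-- Toggling `{i,j}` does not change the induced subgraph on a set avoiding `i` or `j`. -/
lemma induce_toggle_eq {V : Type*} (G : SimpleGraph V) (i j : V)
    (s : Set V) (h : ¬(i ∈ s ∧ j ∈ s)) :
    (toggleEdge G i j).induce s = G.induce s := by
  ext a b
  simp only [comap_adj, Function.Embedding.coe_subtype, toggleEdge, symmDiff_def,
    sup_adj, sdiff_adj, edge_adj]
  have hne : ¬((↑a = i ∧ ↑b = j ∨ ↑a = j ∧ ↑b = i) ∧ (↑a : V) ≠ ↑b) := by
    rintro ⟨(⟨h1, h2⟩ | ⟨h1, h2⟩), -⟩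
    · exact h ⟨h1 ▸ a.2, h2 ▸ b.2⟩
    · exact h ⟨h2 ▸ b.2, h1 ▸ a.2⟩
  tauto

/-- Key geometric lemma: a connected induced subgraph isomorphic to `H` and containing `i`
lies within distance `H.diam` of `i` in any supergraph. -/
lemma subset_ball {V W : Type*} [Fintype W] {G Gp : SimpleGraph V}
    (hle : G ≤ Gp) {H : SimpleGraph W} (hH : H.Connected)
    {s : Set V} (e : G.induce s ≃g H) {i : V} (hi : i ∈ s) :
    ∀ v ∈ s, Gp.dist i v ≤ H.diam := by
  intro v hv
  have hnt : H.ediam ≠ ⊤ := by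
    have : Nonempty W := hH.nonempty
    obtain ⟨u, w, huw⟩ := SimpleGraph.exists_edist_eq_ediam_of_finite (G := H)
    rw [← huw]
    exact SimpleGraph.edist_ne_top_iff_reachable.mpr (hH.preconnected u w)
  have hdist : H.dist (e ⟨i, hi⟩) (e ⟨v, hv⟩) ≤ H.diam := SimpleGraph.dist_le_diam hnt
  obtain ⟨p, hp⟩ := hH.exists_walk_length_eq_dist (e ⟨i, hi⟩) (e ⟨v, hv⟩)
  let q : (G.induce s).Walk ⟨i, hi⟩ ⟨v, hv⟩ :=
    (p.map e.symm.toHom).copy (by simp) (by simp)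
  let q2 : Gp.Walk i v :=
    (q.map (SimpleGraph.Embedding.induce s).toHom).map (SimpleGraph.Hom.ofLE hle)
  have h1 : Gp.dist i v ≤ q2.length := SimpleGraph.dist_le q2
  have h2 : q2.length = p.length := by
    show ((q.map (SimpleGraph.Embedding.induce s).toHom).map (SimpleGraph.Hom.ofLE hle)).length = p.length
    rw [SimpleGraph.Walk.length_map, SimpleGraph.Walk.length_map]
    show ((p.map e.symm.toHom).copy _ _).length = p.length
    rw [SimpleGraph.Walk.length_copy, SimpleGraph.Walk.length_map]
  omega

/-- Induced count update rule. Let `G̃` be obtained from `G` by toggling the single edge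
`{i, j}` (`i ≠ j`), let `H` be a connected pattern with diameter `d`, and let `N` be the
set of vertices at distance at most `d` from `i` in whichever of `G` or `G̃` contains the
edge `{i, j}`. With `G_S := G[N]` and `G̃_S := G̃[N]` the induced subgraphs on `N`, we
have `sub_I(G̃, H) = sub_I(G, H) + sub_I(G̃_S, H) − sub_I(G_S, H)`. -/
theorem inducedSubCount_update_rule
    {V W : Type*} [Fintype V] [Fintype W]
    (G : SimpleGraph V) [DecidableRel G.Adj]
    (H : SimpleGraph W) (hH : H.Connected) (d : ℕ) (hd : H.diam = d)
    (i j : V) (hij : i ≠ j)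
    (G' : SimpleGraph V) (hG' : G' = toggleEdge G i j)
    (N : Set V) (hN : N = {v | (if G.Adj i j then G else G').dist i v ≤ d}) :
    (inducedSubCount G' H : ℤ) =
      inducedSubCount G H + inducedSubCount (G'.induce N) H
        - inducedSubCount (G.induce N) H := by
  classical
  subst hd
  set Gp := if G.Adj i j then G else G' with hGp
  have hGle : G ≤ Gp := by
    by_cases h : G.Adj i j
    · simp [hGp, h]
    · simp only [hGp, if_neg h]
      intro a b hab
      rw [hG']
      simp only [toggleEdge, symmDiff_def, sup_adj, sdiff_adj, edge_adj]
      left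
      refine ⟨hab, ?_⟩
      rintro ⟨(⟨h1, h2⟩ | ⟨h1, h2⟩), -⟩
      · exact h (h1 ▸ h2 ▸ hab)
      · exact h (h1 ▸ h2 ▸ hab.symm)
  have hG'le : G' ≤ Gp := by
    by_cases h : G.Adj i j
    · simp only [hGp, if_pos h]
      intro a b hab
      rw [hG'] at hab
      simp only [toggleEdge, symmDiff_def, sup_adj, sdiff_adj, edge_adj] at hab
      rcases hab with ⟨h1, -⟩ | ⟨⟨(⟨h1, h2⟩ | ⟨h1, h2⟩), hne⟩, -⟩
      · exact h1
      · exact h1 ▸ h2 ▸ h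
      · exact h1 ▸ h2 ▸ h.symm
    · simp [hGp, h]
  -- the induced subgraphs of G and G' agree off sets containing both i and j
  have heq : ∀ s : Set V, ¬(i ∈ s ∧ j ∈ s) → G'.induce s = G.induce s := by
    intro s hs
    rw [hG']
    exact induce_toggle_eq G i j s hs
  -- set-up
  set S : Set (Set V) := {s | Nonempty (G.induce s ≃g H)} with hS
  set S' : Set (Set V) := {s | Nonempty (G'.induce s ≃g H)} with hS'
  set P : Set (Set V) := {s | i ∈ s ∧ j ∈ s} with hP
  have hfinV : Finite V := Finite.of_fintype V
  -- key subset property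
  have key : ∀ s : Set V, i ∈ s →
      (Nonempty (G.induce s ≃g H) ∨ Nonempty (G'.induce s ≃g H)) → s ⊆ N := by
    intro s hi hor v hv
    rcases hor with h | h
    · obtain ⟨e⟩ := h
      exact hN ▸ subset_ball hGle hH e hi v hv
    · obtain ⟨e⟩ := h
      exact hN ▸ subset_ball hG'le hH e hi v hv
  -- correspondence with subsets of N
  set f : Set ↥N → Set V := fun t => Subtype.val '' t with hf
  have hfinj : Function.Injective f := Set.image_injective.mpr Subtype.val_injective
  have hSN : ∀ (K : SimpleGraph V) (t : Set ↥N),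
      Nonempty ((K.induce N).induce t ≃g H) ↔ Nonempty (K.induce (f t) ≃g H) := by
    intro K t
    exact ⟨fun ⟨e⟩ => ⟨(nestIso K N t).symm.trans e⟩, fun ⟨e⟩ => ⟨(nestIso K N t).trans e⟩⟩
  set SN : Set (Set ↥N) := {t | Nonempty ((G.induce N).induce t ≃g H)} with hSNdef
  set SN' : Set (Set ↥N) := {t | Nonempty ((G'.induce N).induce t ≃g H)} with hSN'def
  set Q : Set (Set ↥N) := {t | i ∈ f t ∧ j ∈ f t} with hQ
  -- difference sets agree
  have hPdiff : S \ P = S' \ P := by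
    ext s
    simp only [Set.mem_diff, hS, hS', hP, Set.mem_setOf_eq]
    rw [iff_iff_implies_and_implies]
    constructor
    · rintro ⟨hs, hp⟩
      exact ⟨(heq s hp) ▸ hs, hp⟩
    · rintro ⟨hs, hp⟩
      exact ⟨(heq s hp) ▸ hs, hp⟩
  have hQdiff : SN \ Q = SN' \ Q := by
    ext t
    simp only [Set.mem_diff, hSNdef, hSN'def, hQ, Set.mem_setOf_eq, hSN]
    rw [iff_iff_implies_and_implies]
    constructor
    · rintro ⟨hs, hp⟩
      exact ⟨(heq (f t) hp) ▸ hs, hp⟩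
    · rintro ⟨hs, hp⟩
      exact ⟨(heq (f t) hp) ▸ hs, hp⟩
  -- images
  have himg : f '' (SN ∩ Q) = S ∩ P := by
    ext s
    constructor
    · rintro ⟨t, ⟨ht1, ht2⟩, rfl⟩
      exact ⟨(hSN G t).mp ht1, ht2⟩
    · rintro ⟨hs, hp⟩
      have hsub : s ⊆ N := key s hp.1 (Or.inl hs)
      have hft : f (Subtype.val ⁻¹' s) = s := by
        rw [hf]
        simp only
        rw [Subtype.image_preimage_coe, Set.inter_eq_self_of_subset_right hsub]
      refine ⟨Subtype.val ⁻¹' s, ⟨(hSN G _).mpr ?_, ?_⟩, hft⟩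
      · rw [hft]; exact hs
      · show i ∈ f _ ∧ j ∈ f _
        rw [hft]; exact hp
  have himg' : f '' (SN' ∩ Q) = S' ∩ P := by
    ext s
    constructor
    · rintro ⟨t, ⟨ht1, ht2⟩, rfl⟩
      exact ⟨(hSN G' t).mp ht1, ht2⟩
    · rintro ⟨hs, hp⟩
      have hsub : s ⊆ N := key s hp.1 (Or.inr hs)
      have hft : f (Subtype.val ⁻¹' s) = s := by
        rw [hf]
        simp only
        rw [Subtype.image_preimage_coe, Set.inter_eq_self_of_subset_right hsub]
      refine ⟨Subtype.val ⁻¹' s, ⟨(hSN G' _).mpr ?_, ?_⟩, hft⟩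
      · rw [hft]; exact hs
      · show i ∈ f _ ∧ j ∈ f _
        rw [hft]; exact hp
  -- cardinality computations
  have c1 : (S ∩ P).ncard + (S \ P).ncard = S.ncard :=
    Set.ncard_inter_add_ncard_diff_eq_ncard S P (Set.toFinite S)
  have c2 : (S' ∩ P).ncard + (S' \ P).ncard = S'.ncard :=
    Set.ncard_inter_add_ncard_diff_eq_ncard S' P (Set.toFinite S')
  have c3 : (SN ∩ Q).ncard + (SN \ Q).ncard = SN.ncard :=
    Set.ncard_inter_add_ncard_diff_eq_ncard SN Q (Set.toFinite SN)
  have c4 : (SN' ∩ Q).ncard + (SN' \ Q).ncard = SN'.ncard :=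
    Set.ncard_inter_add_ncard_diff_eq_ncard SN' Q (Set.toFinite SN')
  have c5 : (SN ∩ Q).ncard = (S ∩ P).ncard := by
    rw [← himg, Set.ncard_image_of_injective _ hfinj]
  have c6 : (SN' ∩ Q).ncard = (S' ∩ P).ncard := by
    rw [← himg', Set.ncard_image_of_injective _ hfinj]
  have c7 : (S \ P).ncard = (S' \ P).ncard := by rw [hPdiff]
  have c8 : (SN \ Q).ncard = (SN' \ Q).ncard := by rw [hQdiff]
  show (S'.ncard : ℤ) = S.ncard + SN'.ncard - SN.ncard
  omega
end
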